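/- Let T ⊂ ℝ² be a triangle, E an edge of T with length |E|, and x_E the vertex of T opposite to E. Then for every C¹ scalar function f defined on a neighborhood of the closure of T, the trace identity ∫_E f ds = (|E| / |T|) ∫_T f(x) dx + (|E| / (2|T|)) ∫_T ∇f(x) · (x − x_E) dx holds, where |T| is the area of T, ∫_E · ds the arclength integral over E, and the right-hand integrals are with respect to two-dimensional Lebesgue measure. -/

import Mathlib

open MeasureTheory

noncomputable section

/-- The Euclidean dot product on `ℝ²`. -/
def dot2 (a b : ℝ × ℝ) : ℝ := a.1 * b.1 + a.2 * b.2

/-- The arclength integral `∫_{[A,B]} f ds` over the segment from `A` to `B`. -/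
def lineIntegral (f : ℝ × ℝ → ℝ) (A B : ℝ × ℝ) : ℝ :=
  Real.sqrt (dot2 (B - A) (B - A)) * ∫ t in (0:ℝ)..1, f (A + t • (B - A))

/-- The length `|E|` of the segment `[A,B]`. -/
def edgeLen (A B : ℝ × ℝ) : ℝ := Real.sqrt (dot2 (B - A) (B - A))

/-- The area `|T|` of the triangle with vertices `A`, `B`, `C`. -/
def areaT (A B C : ℝ × ℝ) : ℝ :=
  |(B.1 - A.1) * (C.2 - A.2) - (B.2 - A.2) * (C.1 - A.1)| / 2

/-- Determinant of a continuous linear map on `ℝ × ℝ` in terms of its matrix entries. -/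
lemma det_prod_clm (M : (ℝ × ℝ) →L[ℝ] (ℝ × ℝ)) :
    M.det = (M (1,0)).1 * (M (0,1)).2 - (M (0,1)).1 * (M (1,0)).2 := by
  show LinearMap.det _ = _
  rw [← LinearMap.det_toMatrix (Module.Basis.finTwoProd ℝ), Matrix.det_fin_two]
  simp [LinearMap.toMatrix_apply, Module.Basis.coe_finTwoProd_repr]

/-- Affinely independent triples in the plane have nonzero "cross product". -/
lemma det_ne_triangle (A B C : ℝ × ℝ) (hind : AffineIndependent ℝ ![A, B, C]) :
    (B.1 - A.1) * (C.2 - A.2) - (B.2 - A.2) * (C.1 - A.1) ≠ 0 := by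
  intro hd
  rw [affineIndependent_iff_not_collinear_set] at hind
  apply hind
  rw [collinear_iff_of_mem (show A ∈ ({A, B, C} : Set (ℝ × ℝ)) by simp)]
  have hmem : ∀ p ∈ ({A, B, C} : Set (ℝ × ℝ)), p = A ∨ p = B ∨ p = C := by
    intro p hp; simpa using hp
  by_cases hv1 : B.1 - A.1 ≠ 0
  · refine ⟨B - A, fun p hp => ?_⟩
    rcases hmem p hp with h | h | h <;> rw [h]
    · exact ⟨0, by simp⟩
    · exact ⟨1, by simp⟩
    · refine ⟨(C.1 - A.1) / (B.1 - A.1), ?_⟩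
      have k2 : C.2 = (C.1 - A.1) / (B.1 - A.1) * (B.2 - A.2) + A.2 := by
        field_simp
        linear_combination hd
      have k1 : C.1 = (C.1 - A.1) / (B.1 - A.1) * (B.1 - A.1) + A.1 := by
        field_simp
        ring
      ext
      · simpa using k1
      · simpa using k2
  · push_neg at hv1
    by_cases hv2 : B.2 - A.2 ≠ 0
    · refine ⟨B - A, fun p hp => ?_⟩
      rcases hmem p hp with h | h | h <;> rw [h]
      · exact ⟨0, by simp⟩
      · exact ⟨1, by simp⟩
      · refine ⟨(C.2 - A.2) / (B.2 - A.2), ?_⟩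
        have k1 : C.1 = (C.2 - A.2) / (B.2 - A.2) * (B.1 - A.1) + A.1 := by
          rw [hv1]
          have h1 : (B.2 - A.2) * (C.1 - A.1) = 0 := by
            linear_combination -hd + (C.2 - A.2) * hv1
          rcases mul_eq_zero.1 h1 with h | h
          · exact absurd h hv2
          · simp only [mul_zero, zero_add]; linarith
        have k2 : C.2 = (C.2 - A.2) / (B.2 - A.2) * (B.2 - A.2) + A.2 := by field_simp; ring
        ext
        · simpa using k1
        · simpa using k2
    · push_neg at hv2
      refine ⟨C - A, fun p hp => ?_⟩
      rcases hmem p hp with h | h | h <;> rw [h]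
      · exact ⟨0, by simp⟩
      · refine ⟨0, ?_⟩
        have hB : B = A := by ext <;> linarith
        rw [hB]; simp
      · exact ⟨1, by simp⟩

/-- The trace identity on a triangle `T` with edge `E = [A,B]` and opposite vertex `C`:
`∫_E f ds = (|E|/|T|) ∫_T f + (|E|/(2|T|)) ∫_T ∇f · (x − x_E)` for every `C¹` function `f`
on a neighborhood of the closure of `T`. -/
theorem trace_identity
    (A B C : ℝ × ℝ) (hind : AffineIndependent ℝ ![A, B, C])
    (U : Set (ℝ × ℝ)) (hU : IsOpen U) (hTU : convexHull ℝ {A, B, C} ⊆ U)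
    (f : ℝ × ℝ → ℝ) (hf : ContDiffOn ℝ 1 f U) :
    lineIntegral f A B
      = (edgeLen A B / areaT A B C) * (∫ p in convexHull ℝ {A, B, C}, f p)
        + (edgeLen A B / (2 * areaT A B C)) *
            ∫ p in convexHull ℝ {A, B, C}, fderiv ℝ f p (p - C) := by
  set T : Set (ℝ × ℝ) := convexHull ℝ {A, B, C} with hT
  set vA : ℝ × ℝ := A - C with hvA
  set vB : ℝ × ℝ := B - A with hvB
  set d : ℝ := vA.1 * vB.2 - vA.2 * vB.1 with hd
  have hd' : d = (B.1 - A.1) * (C.2 - A.2) - (B.2 - A.2) * (C.1 - A.1) := by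
    simp only [hd, hvA, hvB, Prod.fst_sub, Prod.snd_sub]; ring
  have hdne : d ≠ 0 := by rw [hd']; exact det_ne_triangle A B C hind
  have harea : areaT A B C = |d| / 2 := by rw [areaT, hd']
  have hdpos : (0:ℝ) < |d| := abs_pos.2 hdne
  have hTcvx : Convex ℝ T := convex_convexHull ℝ _
  have hAmem : A ∈ T := subset_convexHull ℝ _ (by simp)
  have hBmem : B ∈ T := subset_convexHull ℝ _ (by simp)
  have hCmem : C ∈ T := subset_convexHull ℝ _ (by simp)
  -- the parametrization Φ(t, r) = C + r (A - C) + r t (B - A)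
  set Φ : ℝ × ℝ → ℝ × ℝ := fun p => C + p.2 • vA + (p.2 * p.1) • vB with hΦ
  set s : Set (ℝ × ℝ) := Set.Icc (0:ℝ) 1 ×ˢ Set.Ioc (0:ℝ) 1 with hs
  set K : Set (ℝ × ℝ) := Set.Icc (0:ℝ) 1 ×ˢ Set.Icc (0:ℝ) 1 with hK
  have hsm : MeasurableSet s := measurableSet_Icc.prod measurableSet_Ioc
  have hsK : s ⊆ K := Set.prod_mono subset_rfl Set.Ioc_subset_Icc_self
  -- derivative of Φ
  set M : ℝ × ℝ → ((ℝ × ℝ) →L[ℝ] (ℝ × ℝ)) := fun p =>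
    (ContinuousLinearMap.snd ℝ ℝ ℝ).smulRight vA +
      (p.2 • ContinuousLinearMap.fst ℝ ℝ ℝ + p.1 • ContinuousLinearMap.snd ℝ ℝ ℝ).smulRight vB
    with hM
  have hMapp : ∀ p q : ℝ × ℝ, M p q = q.2 • vA + (p.2 * q.1 + p.1 * q.2) • vB := by
    intro p q
    simp [hM, ContinuousLinearMap.smulRight_apply, smul_eq_mul, add_smul]
  have hMder : ∀ p : ℝ × ℝ, HasFDerivAt Φ (M p) p := by
    intro p
    rw [hΦ, hM]
    have h1 : HasFDerivAt (fun p : ℝ × ℝ => p.2 • vA)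
        ((ContinuousLinearMap.snd ℝ ℝ ℝ).smulRight vA) p := hasFDerivAt_snd.smul_const vA
    have h2 : HasFDerivAt (fun p : ℝ × ℝ => p.2 * p.1)
        (p.2 • ContinuousLinearMap.fst ℝ ℝ ℝ + p.1 • ContinuousLinearMap.snd ℝ ℝ ℝ) p :=
      hasFDerivAt_snd.mul hasFDerivAt_fst
    exact (h1.const_add C).add (h2.smul_const vB)
  have hMdet : ∀ p : ℝ × ℝ, (M p).det = -(p.2 * d) := by
    intro p
    rw [det_prod_clm, hMapp, hMapp]
    simp only [Prod.fst_add, Prod.snd_add, Prod.smul_fst, Prod.smul_snd, smul_eq_mul, hd]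
    ring
  -- injectivity of Φ on s
  have hinj : Set.InjOn Φ s := by
    rintro p ⟨hp1, hp2⟩ q ⟨hq1, hq2⟩ hpq
    rw [hΦ] at hpq
    simp only [Prod.ext_iff, Prod.fst_add, Prod.snd_add, Prod.smul_fst, Prod.smul_snd,
      smul_eq_mul] at hpq
    obtain ⟨e1, e2⟩ := hpq
    have h1 : (p.2 - q.2) * d = 0 := by rw [hd]; linear_combination vB.2 * e1 - vB.1 * e2
    have h2 : (p.2 * p.1 - q.2 * q.1) * d = 0 := by
      rw [hd]; linear_combination (-vA.2) * e1 + vA.1 * e2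
    have hr : p.2 = q.2 := by
      rcases mul_eq_zero.1 h1 with h | h
      · linarith
      · exact absurd h hdne
    have hrt : p.2 * p.1 = q.2 * q.1 := by
      rcases mul_eq_zero.1 h2 with h | h
      · linarith
      · exact absurd h hdne
    have ht : p.1 = q.1 := by
      rw [hr] at hrt
      exact mul_left_cancel₀ (by rw [← hr]; exact ne_of_gt hp2.1) hrt
    exact Prod.ext ht hr
  -- Φ in convex-combination form
  have hkey : ∀ p : ℝ × ℝ, Φ p = (1 - p.2) • C + p.2 • ((1 - p.1) • A + p.1 • B) := by
    intro p
    rw [hΦ, hvA, hvB]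
    module
  -- image facts
  have hmaps : ∀ p ∈ K, Φ p ∈ T := by
    rintro p ⟨⟨ht0, ht1⟩, ⟨hr0, hr1⟩⟩
    rw [hkey]
    have hz : (1 - p.1) • A + p.1 • B ∈ T := hTcvx hAmem hBmem (by linarith) ht0 (by ring)
    exact hTcvx hCmem hz (by linarith) hr0 (by ring)
  have himg : Φ '' s ⊆ T := by
    rintro x ⟨p, hp, rfl⟩
    exact hmaps p (hsK hp)
  have himg2 : T ⊆ Φ '' s ∪ {C} := by
    intro x hx
    have hset : ({A, B, C} : Set (ℝ × ℝ)) = insert C {A, B} := by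
      ext y; simp; tauto
    rw [hT, hset, convexHull_insert ⟨A, by simp⟩] at hx
    rw [mem_convexJoin] at hx
    obtain ⟨c', hc', z, hz, hxz⟩ := hx
    rw [Set.mem_singleton_iff] at hc'
    rw [hc'] at hxz
    rw [convexHull_pair, segment_eq_image' ℝ A B] at hz
    obtain ⟨t, ht, rfl⟩ := hz
    rw [segment_eq_image' ℝ C _] at hxz
    obtain ⟨r, hr, rfl⟩ := hxz
    rcases eq_or_lt_of_le hr.1 with h0 | h0
    · right; simp [← h0]
    · left
      refine ⟨(t, r), ⟨ht, h0, hr.2⟩, ?_⟩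
      rw [hΦ, hvA, hvB]
      module
  have haeeq : Φ '' s =ᵐ[volume] T := by
    rw [MeasureTheory.ae_eq_set]
    constructor
    · rw [Set.diff_eq_empty.2 himg]; exact measure_empty
    · refine measure_mono_null (fun x hx => ?_) (measure_singleton C)
      rcases himg2 hx.1 with h | h
      · exact absurd h hx.2
      · exact h
  -- continuity facts
  have hfc : ContinuousOn f U := hf.continuousOn
  have hdc : ContinuousOn (fderiv ℝ f) U := hf.continuousOn_fderiv_of_isOpen hU le_rfl
  have hdiff : DifferentiableOn ℝ f U := hf.differentiableOn one_ne_zero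
  set g : ℝ × ℝ → ℝ := fun x => 2 * f x + fderiv ℝ f x (x - C) with hg
  have hgc : ContinuousOn g U := by
    apply (continuousOn_const.mul hfc).add
    exact hdc.clm_apply (continuousOn_id.sub continuousOn_const)
  have hΦcont : Continuous Φ := by
    rw [hΦ]
    exact (continuous_const.add (continuous_snd.smul continuous_const)).add
      ((continuous_snd.mul continuous_fst).smul continuous_const)
  have hTcomp : IsCompact T := by
    apply Set.Finite.isCompact_convexHull
    exact (Set.finite_singleton C).insert B |>.insert A
  have hTmeas : MeasurableSet T := hTcomp.isClosed.measurableSet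
  have hIf : IntegrableOn f T := (hfc.mono hTU).integrableOn_compact hTcomp
  have hIdf : IntegrableOn (fun p => fderiv ℝ f p (p - C)) T :=
    ((hdc.clm_apply (continuousOn_id.sub continuousOn_const)).mono hTU).integrableOn_compact
      hTcomp
  -- lift the integrand through Φ
  set F : ℝ × ℝ → ℝ := fun p => (p.2 * |d|) * g (Φ p) with hF
  have hFcont : ContinuousOn F K := by
    apply (continuous_snd.mul continuous_const).continuousOn.mul
    exact hgc.comp hΦcont.continuousOn (fun p hp => hTU (hmaps p hp))
  have hKcomp : IsCompact K := isCompact_Icc.prod isCompact_Icc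
  have hFint : IntegrableOn F s := (hFcont.integrableOn_compact hKcomp).mono_set hsK
  -- change of variables
  have hCoV : ∫ p in Φ '' s, g p = ∫ p in s, |(M p).det| • g (Φ p) :=
    integral_image_eq_integral_abs_det_fderiv_smul volume hsm
      (fun p _ => (hMder p).hasFDerivWithinAt) hinj g
  have hdetfix : ∀ p ∈ s, |(M p).det| • g (Φ p) = F p := by
    rintro p ⟨_, hp2⟩
    rw [hMdet p, hF]
    have : |(-(p.2 * d))| = p.2 * |d| := by
      rw [abs_neg, abs_mul, abs_of_pos hp2.1]
    rw [this, smul_eq_mul]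
  -- the inner FTC computation
  have hinner : ∀ t ∈ Set.Icc (0:ℝ) 1,
      (∫ r in Set.Ioc (0:ℝ) 1, F (t, r)) = |d| * f (A + t • (B - A)) := by
    intro t ht
    set w : ℝ × ℝ := vA + t • vB with hw
    have hψT : ∀ r ∈ Set.Icc (0:ℝ) 1, C + r • w ∈ T := by
      intro r hr
      have : C + r • w = Φ (t, r) := by rw [hΦ, hw]; module
      rw [this]
      exact hmaps (t, r) ⟨ht, hr⟩
    have hFeq : ∀ r : ℝ, F (t, r)
        = |d| * (2 * r * f (C + r • w) + r ^ 2 * fderiv ℝ f (C + r • w) w) := by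
      intro r
      have hx : Φ (t, r) = C + r • w := by rw [hΦ, hw]; module
      have hxc : Φ (t, r) - C = r • w := by rw [hx]; abel
      rw [hF, hg]
      simp only [hx, add_sub_cancel_left]
      rw [(fderiv ℝ f (C + r • w)).map_smul]
      simp only [smul_eq_mul]
      ring
    have hψcont : Continuous (fun r : ℝ => C + r • w) :=
      continuous_const.add (continuous_id.smul continuous_const)
    have hder : ∀ r ∈ Set.Icc (0:ℝ) 1,
        HasDerivAt (fun r : ℝ => |d| * (r ^ 2 * f (C + r • w)))
          (|d| * (2 * r * f (C + r • w) + r ^ 2 * fderiv ℝ f (C + r • w) w)) r := by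
      intro r hr
      have hxU : C + r • w ∈ U := hTU (hψT r hr)
      have hfd : HasFDerivAt f (fderiv ℝ f (C + r • w)) (C + r • w) :=
        (hdiff.differentiableAt (hU.mem_nhds hxU)).hasFDerivAt
      have hψ : HasDerivAt (fun r : ℝ => C + r • w) w r := by
        simpa using ((hasDerivAt_id r).smul_const w).const_add C
      have hcomp : HasDerivAt (fun r : ℝ => f (C + r • w))
          (fderiv ℝ f (C + r • w) w) r := hfd.comp_hasDerivAt r hψ
      have hpow : HasDerivAt (fun r : ℝ => r ^ 2) (2 * r) r := by
        simpa using hasDerivAt_pow 2 r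
      have := (hpow.mul hcomp).const_mul |d|
      exact this
    have hdercont : ContinuousOn
        (fun r : ℝ => |d| * (2 * r * f (C + r • w) + r ^ 2 * fderiv ℝ f (C + r • w) w))
        (Set.Icc (0:ℝ) 1) := by
      have hfU : ContinuousOn (fun r : ℝ => f (C + r • w)) (Set.Icc (0:ℝ) 1) :=
        hfc.comp hψcont.continuousOn (fun r hr => hTU (hψT r hr))
      have hdU : ContinuousOn (fun r : ℝ => fderiv ℝ f (C + r • w) w) (Set.Icc (0:ℝ) 1) :=
        (hdc.comp hψcont.continuousOn (fun r hr => hTU (hψT r hr))).clm_apply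
          continuousOn_const
      exact continuousOn_const.mul
        (((continuousOn_const.mul continuousOn_id).mul hfU).add
          ((continuousOn_id.pow 2).mul hdU))
    have hii : IntervalIntegrable
        (fun r : ℝ => |d| * (2 * r * f (C + r • w) + r ^ 2 * fderiv ℝ f (C + r • w) w))
        volume 0 1 := by
      apply ContinuousOn.intervalIntegrable
      rwa [Set.uIcc_of_le zero_le_one]
    have hFTC := intervalIntegral.integral_eq_sub_of_hasDerivAt
      (fun r hr => hder r (by rwa [Set.uIcc_of_le zero_le_one] at hr)) hii
    have hend : C + (1:ℝ) • w = A + t • (B - A) := by rw [hw, hvA, hvB]; module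
    calc (∫ r in Set.Ioc (0:ℝ) 1, F (t, r))
        = ∫ r in Set.Ioc (0:ℝ) 1,
            |d| * (2 * r * f (C + r • w) + r ^ 2 * fderiv ℝ f (C + r • w) w) := by
          apply setIntegral_congr_fun measurableSet_Ioc
          intro r _
          exact hFeq r
      _ = ∫ r in (0:ℝ)..1,
            |d| * (2 * r * f (C + r • w) + r ^ 2 * fderiv ℝ f (C + r • w) w) :=
          (intervalIntegral.integral_of_le zero_le_one).symm
      _ = |d| * ((1:ℝ) ^ 2 * f (C + (1:ℝ) • w)) - |d| * ((0:ℝ) ^ 2 * f (C + (0:ℝ) • w)) :=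
          hFTC
      _ = |d| * f (A + t • (B - A)) := by rw [hend]; ring
  -- Fubini
  have hprod : (volume : Measure (ℝ × ℝ)) = (volume : Measure ℝ).prod volume :=
    Measure.volume_eq_prod ℝ ℝ
  have hFub : ∫ p in s, F p = ∫ t in Set.Icc (0:ℝ) 1, ∫ r in Set.Ioc (0:ℝ) 1, F (t, r) := by
    rw [hs, hprod]
    apply setIntegral_prod
    rw [← hprod]
    exact hFint
  -- putting it together
  have hmain : ∫ p in T, g p = |d| * ∫ t in (0:ℝ)..1, f (A + t • (B - A)) := by
    calc ∫ p in T, g p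
        = ∫ p in Φ '' s, g p := (setIntegral_congr_set haeeq).symm
      _ = ∫ p in s, |(M p).det| • g (Φ p) := hCoV
      _ = ∫ p in s, F p := setIntegral_congr_fun hsm hdetfix
      _ = ∫ t in Set.Icc (0:ℝ) 1, ∫ r in Set.Ioc (0:ℝ) 1, F (t, r) := hFub
      _ = ∫ t in Set.Icc (0:ℝ) 1, |d| * f (A + t • (B - A)) :=
          setIntegral_congr_fun measurableSet_Icc hinner
      _ = ∫ t in Set.Ioc (0:ℝ) 1, |d| * f (A + t • (B - A)) :=
          integral_Icc_eq_integral_Ioc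
      _ = ∫ t in (0:ℝ)..1, |d| * f (A + t • (B - A)) :=
          (intervalIntegral.integral_of_le zero_le_one).symm
      _ = |d| * ∫ t in (0:ℝ)..1, f (A + t • (B - A)) := by
          rw [intervalIntegral.integral_const_mul]
  have hsplit : ∫ p in T, g p
      = 2 * (∫ p in T, f p) + ∫ p in T, fderiv ℝ f p (p - C) := by
    rw [hg]
    rw [integral_add (hIf.const_mul 2) hIdf, integral_const_mul]
  -- final algebra
  rw [lineIntegral, ← edgeLen, harea]
  set I : ℝ := ∫ t in (0:ℝ)..1, f (A + t • (B - A)) with hI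
  set F1 : ℝ := ∫ p in T, f p with hF1
  set F2 : ℝ := ∫ p in T, fderiv ℝ f p (p - C) with hF2
  have hk : 2 * F1 + F2 = |d| * I := by rw [← hsplit, hmain]
  have h2 : (2:ℝ) * (|d| / 2) = |d| := by ring
  have hstep : edgeLen A B / (|d| / 2) * F1 + edgeLen A B / (2 * (|d| / 2)) * F2
      = edgeLen A B / |d| * (2 * F1 + F2) := by
    field_simp
  rw [hstep, hk, ← mul_assoc, div_mul_cancel₀ _ (abs_ne_zero.mpr hdne)]
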